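/- The quartic form f^{μ,ν,0} = x³y + y³z + z³t + t³x + μ x²z² + ν y²t² over an algebraically closed field k of characteristic zero is singular if and only if 256(1 + 3μ²ν²)² = (27μ² + 6μν + 27ν² - 16μ³ν³)². -/
import Mathlib


open MvPolynomial

/-- A quartic form in `k[x,y,z,t]` is singular if its four partial derivatives have a common
zero in `k⁴ \ {0}`, i.e. the projective surface `V(f) ⊆ ℙ³(k)` has a singular point. -/
def MvPolynomial.IsSingularForm {k : Type*} [CommRing k] (f : MvPolynomial (Fin 4) k) : Prop :=
  ∃ p : Fin 4 → k, p ≠ 0 ∧ ∀ i : Fin 4, eval p (pderiv i f) = 0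

private lemma pd0 {k : Type*} [CommRing k] (μ ν : k) (p : Fin 4 → k) :
    eval p (pderiv 0 (X 0 ^ 3 * X 1 + X 1 ^ 3 * X 2 + X 2 ^ 3 * X 3 + X 3 ^ 3 * X 0 +
        C μ * X 0 ^ 2 * X 2 ^ 2 + C ν * X 1 ^ 2 * X 3 ^ 2 : MvPolynomial (Fin 4) k)) =
    3 * (p 0)^2 * p 1 + (p 3)^3 + 2 * μ * p 0 * (p 2)^2 := by
  simp [pderiv_mul, pderiv_pow, pderiv_X, Pi.single_apply]
  ring

private lemma pd1 {k : Type*} [CommRing k] (μ ν : k) (p : Fin 4 → k) :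
    eval p (pderiv 1 (X 0 ^ 3 * X 1 + X 1 ^ 3 * X 2 + X 2 ^ 3 * X 3 + X 3 ^ 3 * X 0 +
        C μ * X 0 ^ 2 * X 2 ^ 2 + C ν * X 1 ^ 2 * X 3 ^ 2 : MvPolynomial (Fin 4) k)) =
    (p 0)^3 + 3 * (p 1)^2 * p 2 + 2 * ν * p 1 * (p 3)^2 := by
  simp [pderiv_mul, pderiv_pow, pderiv_X, Pi.single_apply]
  ring

private lemma pd2 {k : Type*} [CommRing k] (μ ν : k) (p : Fin 4 → k) :
    eval p (pderiv 2 (X 0 ^ 3 * X 1 + X 1 ^ 3 * X 2 + X 2 ^ 3 * X 3 + X 3 ^ 3 * X 0 +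
        C μ * X 0 ^ 2 * X 2 ^ 2 + C ν * X 1 ^ 2 * X 3 ^ 2 : MvPolynomial (Fin 4) k)) =
    (p 1)^3 + 3 * (p 2)^2 * p 3 + 2 * μ * (p 0)^2 * p 2 := by
  simp [pderiv_mul, pderiv_pow, pderiv_X, Pi.single_apply]
  ring

private lemma pd3 {k : Type*} [CommRing k] (μ ν : k) (p : Fin 4 → k) :
    eval p (pderiv 3 (X 0 ^ 3 * X 1 + X 1 ^ 3 * X 2 + X 2 ^ 3 * X 3 + X 3 ^ 3 * X 0 +
        C μ * X 0 ^ 2 * X 2 ^ 2 + C ν * X 1 ^ 2 * X 3 ^ 2 : MvPolynomial (Fin 4) k)) =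
    (p 2)^3 + 3 * (p 3)^2 * p 0 + 2 * ν * (p 1)^2 * p 3 := by
  simp [pderiv_mul, pderiv_pow, pderiv_X, Pi.single_apply]
  ring

/-- Construction of a singular point from a solution of the two key scalar equations,
family with sign `ε = ±1` : the point `(x, 1, εx, ε)`. -/
private lemma mk_singular {k : Type*} [Field k] [CharZero k] (μ ν x ε : k)
    (hε : ε = 1 ∨ ε = -1)
    (hg1 : 2*μ*x^3 + 3*x^2 + ε = 0) (hg2 : x^3 + 3*ε*x + 2*ν = 0) :
    (X 0 ^ 3 * X 1 + X 1 ^ 3 * X 2 + X 2 ^ 3 * X 3 + X 3 ^ 3 * X 0 +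
        C μ * X 0 ^ 2 * X 2 ^ 2 +
        C ν * X 1 ^ 2 * X 3 ^ 2 : MvPolynomial (Fin 4) k).IsSingularForm := by
  have hε2 : ε^2 = 1 := by rcases hε with h | h <;> rw [h] <;> ring
  set q : Fin 4 → k := ![x, 1, ε*x, ε] with hqdef
  have hq0 : q 0 = x := rfl
  have hq1 : q 1 = 1 := rfl
  have hq2 : q 2 = ε*x := rfl
  have hq3 : q 3 = ε := rfl
  have e0 : eval q (pderiv 0 (X 0 ^ 3 * X 1 + X 1 ^ 3 * X 2 + X 2 ^ 3 * X 3 + X 3 ^ 3 * X 0 +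
      C μ * X 0 ^ 2 * X 2 ^ 2 + C ν * X 1 ^ 2 * X 3 ^ 2 : MvPolynomial (Fin 4) k)) = 0 := by
    rw [pd0, hq0, hq1, hq2, hq3]
    linear_combination hg1 + (2*μ*x^3 + ε)*hε2
  have e1 : eval q (pderiv 1 (X 0 ^ 3 * X 1 + X 1 ^ 3 * X 2 + X 2 ^ 3 * X 3 + X 3 ^ 3 * X 0 +
      C μ * X 0 ^ 2 * X 2 ^ 2 + C ν * X 1 ^ 2 * X 3 ^ 2 : MvPolynomial (Fin 4) k)) = 0 := by
    rw [pd1, hq0, hq1, hq2, hq3]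
    linear_combination hg2 + 2*ν*hε2
  have e2 : eval q (pderiv 2 (X 0 ^ 3 * X 1 + X 1 ^ 3 * X 2 + X 2 ^ 3 * X 3 + X 3 ^ 3 * X 0 +
      C μ * X 0 ^ 2 * X 2 ^ 2 + C ν * X 1 ^ 2 * X 3 ^ 2 : MvPolynomial (Fin 4) k)) = 0 := by
    rw [pd2, hq0, hq1, hq2, hq3]
    linear_combination ε*hg1 + (3*x^2*ε - 1)*hε2
  have e3 : eval q (pderiv 3 (X 0 ^ 3 * X 1 + X 1 ^ 3 * X 2 + X 2 ^ 3 * X 3 + X 3 ^ 3 * X 0 +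
      C μ * X 0 ^ 2 * X 2 ^ 2 + C ν * X 1 ^ 2 * X 3 ^ 2 : MvPolynomial (Fin 4) k)) = 0 := by
    rw [pd3, hq0, hq1, hq2, hq3]
    linear_combination ε*hg2 + x^3*ε*hε2
  refine ⟨q, ?_, ?_⟩
  · intro h
    have := congrFun h 1
    simp [hqdef] at this
  · intro i
    fin_cases i
    · exact e0
    · exact e1
    · exact e2
    · exact e3

/-- the quartic form `f^{μ,ν,0} = x³y + y³z + z³t + t³x + μx²z² + νy²t²` is
singular iff `256(1 + 3μ²ν²)² = (27μ² + 6μν + 27ν² - 16μ³ν³)²`. -/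
theorem stmt_10 {k : Type*} [Field k] [IsAlgClosed k] [CharZero k] (μ ν : k) :
    (X 0 ^ 3 * X 1 + X 1 ^ 3 * X 2 + X 2 ^ 3 * X 3 + X 3 ^ 3 * X 0 +
        C μ * X 0 ^ 2 * X 2 ^ 2 +
        C ν * X 1 ^ 2 * X 3 ^ 2 : MvPolynomial (Fin 4) k).IsSingularForm ↔
      256 * (1 + 3 * μ ^ 2 * ν ^ 2) ^ 2 =
        (27 * μ ^ 2 + 6 * μ * ν + 27 * ν ^ 2 - 16 * μ ^ 3 * ν ^ 3) ^ 2 := by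
  constructor
  · -- forward direction
    rintro ⟨p, hp, hev⟩
    set x := p 0 with hxdef
    set y := p 1 with hydef
    set z := p 2 with hzdef
    set t := p 3 with htdef
    have hE1 : 3*x^2*y + t^3 + 2*μ*x*z^2 = 0 := by have h := hev 0; rwa [pd0] at h
    have hE2 : x^3 + 3*y^2*z + 2*ν*y*t^2 = 0 := by have h := hev 1; rwa [pd1] at h
    have hE3 : y^3 + 3*z^2*t + 2*μ*x^2*z = 0 := by have h := hev 2; rwa [pd2] at h
    have hE4 : z^3 + 3*t^2*x + 2*ν*y^2*t = 0 := by have h := hev 3; rwa [pd3] at h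
    have cube : ∀ a : k, a^3 = 0 → a = 0 := fun a ha => pow_eq_zero_iff (by norm_num) |>.mp ha
    have hz0 : z ≠ 0 := by
      intro h
      have hy0 : y = 0 := cube y (by linear_combination hE3 - (3*z*t + 2*μ*x^2)*h)
      have hx0 : x = 0 := cube x (by linear_combination hE2 - 3*y^2*h - (2*ν*t^2)*hy0)
      have ht0 : t = 0 := cube t (by linear_combination hE1 - 3*x*y*hx0 - (2*μ*z^2)*hx0)
      exact hp (funext fun i => by fin_cases i <;> simpa)
    have hx0 : x ≠ 0 := by
      intro h
      have ht0 : t = 0 := cube t (by linear_combination hE1 - (3*x*y + 2*μ*z^2)*h)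
      exact hz0 (cube z (by linear_combination hE4 - 3*t*x*ht0 - (2*ν*y^2)*ht0))
    have ht0 : t ≠ 0 := by
      intro h
      exact hz0 (cube z (by linear_combination hE4 - (3*t*x + 2*ν*y^2)*h))
    have hy0 : y ≠ 0 := by
      intro h
      exact hx0 (cube x (by linear_combination hE2 - (3*y*z + 2*ν*t^2)*h))
    have hi : 3*x^3*y + x*t^3 - y^3*z - 3*z^3*t = 0 := by
      linear_combination x*hE1 - z*hE3
    have hii : x^3*y + 3*y^3*z - z^3*t - 3*t^3*x = 0 := by
      have h' : t*(x^3*y + 3*y^3*z - z^3*t - 3*t^3*x) = 0 := by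
        linear_combination y*t*hE2 - t^2*hE4
      exact (mul_eq_zero.mp h').resolve_left ht0
    have hzrel : y^3*z - t^3*x = 0 := by
      linear_combination (3/10 : k)*hii - (1/10 : k)*hi
    have h10 : t^10 = y^10 := by
      have h' : x^3*(y^10 - t^10) = 0 := by
        linear_combination (y^9/3)*hi +
          ((y^9 + 3*t*(y^6*z^2 + y^3*z*t^3*x + t^6*x^2))/3)*hzrel
      have h'' := (mul_eq_zero.mp h').resolve_left (pow_ne_zero 3 hx0)
      linear_combination -h''
    have hA : 2*μ*t^6*x^3 + 3*x^2*y^7 + t^3*y^6 = 0 := by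
      linear_combination y^6*hE1 - 2*μ*x*(y^3*z + t^3*x)*hzrel
    have hB : x^3*y + 3*t^3*x + 2*ν*y^2*t^2 = 0 := by
      linear_combination y*hE2 - 3*hzrel
    have hkey : t^4*y^21*((16 + 48*μ^2*ν^2)*t^5 +
        (27*μ^2 + 6*μ*ν + 27*ν^2 - 16*μ^3*ν^3)*y^5) = 0 := by
      linear_combination (6*t^3*y^16*x^2 + 16*t^6*y^15 + (-9/2)*ν*t^2*y^18*x + (3/2)*μ*t^12*y^8*x + 3*μ*ν*t^8*y^11*x^2 + 7*μ*ν*t^11*y^10 + 9*μ^2*t^18*y*x^2 + 27*μ^2*t^21 + (-6)*μ^2*ν*t^17*y^3*x + 4*μ^2*ν^2*t^16*y^5)*hA + ((-18)*t^3*y^22*x + (27/2)*ν*t^2*y^24 + (-12)*μ*t^9*y^15*x^2 + (-1/2)*μ*t^12*y^14 + (-30)*μ^2*t^18*y^7*x + (-6)*μ^2*ν*t^14*y^10*x^2 + 22*μ^2*ν*t^17*y^9 + (-18)*μ^3*t^24*x^2 + 12*μ^3*ν*t^23*y^2*x + (-8)*μ^3*ν^2*t^22*y^4)*hB + ((-6)*μ*ν*t^4*y^16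 + (-27)*μ^2*t^4*y^16 + (-27)*μ^2*t^14*y^6 + (-48)*μ^2*ν^2*t^9*y^11 + 16*μ^3*ν^3*t^4*y^16 + 16*μ^3*ν^3*t^14*y^6)*h10
    have hmain : (16 + 48*μ^2*ν^2)*t^5 +
        (27*μ^2 + 6*μ*ν + 27*ν^2 - 16*μ^3*ν^3)*y^5 = 0 := by
      rcases mul_eq_zero.mp hkey with h' | h'
      · rcases mul_eq_zero.mp h' with h'' | h''
        · exact absurd h'' (pow_ne_zero 4 ht0)
        · exact absurd h'' (pow_ne_zero 21 hy0)
      · exact h'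
    have hsplit : (t^5 - y^5)*(t^5 + y^5) = 0 := by linear_combination h10
    rcases mul_eq_zero.mp hsplit with h5 | h5
    · -- t^5 = y^5 : case A + B = 0
      have hAB : ((16 + 48*μ^2*ν^2) +
          (27*μ^2 + 6*μ*ν + 27*ν^2 - 16*μ^3*ν^3))*y^5 = 0 := by
        linear_combination hmain - (16 + 48*μ^2*ν^2)*h5
      have hAB' := (mul_eq_zero.mp hAB).resolve_right (pow_ne_zero 5 hy0)
      linear_combination ((16 + 48*μ^2*ν^2) -
        (27*μ^2 + 6*μ*ν + 27*ν^2 - 16*μ^3*ν^3))*hAB'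
    · -- t^5 = -y^5 : case A - B = 0
      have hAB : ((16 + 48*μ^2*ν^2) -
          (27*μ^2 + 6*μ*ν + 27*ν^2 - 16*μ^3*ν^3))*y^5 = 0 := by
        linear_combination (16 + 48*μ^2*ν^2)*h5 - hmain
      have hAB' := (mul_eq_zero.mp hAB).resolve_right (pow_ne_zero 5 hy0)
      linear_combination ((16 + 48*μ^2*ν^2) +
        (27*μ^2 + 6*μ*ν + 27*ν^2 - 16*μ^3*ν^3))*hAB'
  · -- backward direction
    intro h
    have hf : ((16 + 48*μ^2*ν^2) - (27*μ^2 + 6*μ*ν + 27*ν^2 - 16*μ^3*ν^3)) *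
        ((16 + 48*μ^2*ν^2) + (27*μ^2 + 6*μ*ν + 27*ν^2 - 16*μ^3*ν^3)) = 0 := by
      linear_combination h
    rcases mul_eq_zero.mp hf with hm | hp2
    · -- A - B = 0 : family (x, 1, -x, -1)
      have key : ∃ x : k, 3*x^2 + 6*μ*x - (1 + 4*μ*ν) = 0 ∧
          (12*μ^2 + 4*μ*ν - 8)*x + (6*ν - 2*μ - 8*μ^2*ν) = 0 := by
        by_cases hP : (12*μ^2 + 4*μ*ν - 8 : k) = 0
        · have h3Q : 3*(6*ν - 2*μ - 8*μ^2*ν)^2 = 0 := by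
            linear_combination (-4 : k)*hm +
              (6*μ*(6*ν - 2*μ - 8*μ^2*ν) + (1 + 4*μ*ν)*(12*μ^2 + 4*μ*ν - 8))*hP
          have hQ : (6*ν - 2*μ - 8*μ^2*ν : k) = 0 := by
            have := mul_eq_zero.mp h3Q
            rcases this with h' | h'
            · exact absurd h' (by norm_num)
            · exact pow_eq_zero_iff (by norm_num) |>.mp h'
          obtain ⟨s, hs⟩ := IsAlgClosed.exists_pow_nat_eq (μ^2 + (1 + 4*μ*ν)/3) (n := 2)
            (by norm_num)
          refine ⟨s - μ, by linear_combination 3*hs, ?_⟩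
          linear_combination (s - μ)*hP + hQ
        · set x : k := -(6*ν - 2*μ - 8*μ^2*ν)/(12*μ^2 + 4*μ*ν - 8) with hxd
          have h1 : -(6*ν - 2*μ - 8*μ^2*ν)/(12*μ^2 + 4*μ*ν - 8)*(12*μ^2 + 4*μ*ν - 8)
              = -(6*ν - 2*μ - 8*μ^2*ν) := div_mul_cancel₀ _ hP
          have hL : (12*μ^2 + 4*μ*ν - 8)*x + (6*ν - 2*μ - 8*μ^2*ν) = 0 := by
            rw [hxd]; linear_combination h1
          refine ⟨x, ?_, hL⟩
          have hq' : (3*x^2 + 6*μ*x - (1 + 4*μ*ν))*(12*μ^2 + 4*μ*ν - 8)^2 = 0 := by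
            linear_combination (3*((12*μ^2 + 4*μ*ν - 8)*x - (6*ν - 2*μ - 8*μ^2*ν)) +
              6*μ*(12*μ^2 + 4*μ*ν - 8))*hL + (-4 : k)*hm
          rcases mul_eq_zero.mp hq' with h' | h'
          · exact h'
          · exact absurd h' (pow_ne_zero 2 hP)
      obtain ⟨x, hq, hL⟩ := key
      have hg2 : x^3 + 3*(-1 : k)*x + 2*ν = 0 := by
        linear_combination (x/3 - 2*μ/3)*hq + (1/3 : k)*hL
      have hg1 : 2*μ*x^3 + 3*x^2 + (-1 : k) = 0 := by
        linear_combination 2*μ*hg2 + hq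
      exact mk_singular μ ν x (-1) (Or.inr rfl) hg1 hg2
    · -- A + B = 0 : family (x, 1, x, 1)
      have key : ∃ x : k, 3*x^2 - 6*μ*x + (1 - 4*μ*ν) = 0 ∧
          (12*μ^2 + 4*μ*ν + 8)*x + (6*ν - 2*μ + 8*μ^2*ν) = 0 := by
        by_cases hP : (12*μ^2 + 4*μ*ν + 8 : k) = 0
        · have h3Q : 3*(6*ν - 2*μ + 8*μ^2*ν)^2 = 0 := by
            linear_combination (4 : k)*hp2 -
              (6*μ*(6*ν - 2*μ + 8*μ^2*ν) + (1 - 4*μ*ν)*(12*μ^2 + 4*μ*ν + 8))*hP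
          have hQ : (6*ν - 2*μ + 8*μ^2*ν : k) = 0 := by
            rcases mul_eq_zero.mp h3Q with h' | h'
            · exact absurd h' (by norm_num)
            · exact pow_eq_zero_iff (by norm_num) |>.mp h'
          obtain ⟨s, hs⟩ := IsAlgClosed.exists_pow_nat_eq (μ^2 - (1 - 4*μ*ν)/3) (n := 2)
            (by norm_num)
          refine ⟨μ + s, by linear_combination 3*hs, ?_⟩
          linear_combination (μ + s)*hP + hQ
        · set x : k := -(6*ν - 2*μ + 8*μ^2*ν)/(12*μ^2 + 4*μ*ν + 8) with hxd
          have h1 : -(6*ν - 2*μ + 8*μ^2*ν)/(12*μ^2 + 4*μ*ν + 8)*(12*μ^2 + 4*μ*ν + 8)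
              = -(6*ν - 2*μ + 8*μ^2*ν) := div_mul_cancel₀ _ hP
          have hL : (12*μ^2 + 4*μ*ν + 8)*x + (6*ν - 2*μ + 8*μ^2*ν) = 0 := by
            rw [hxd]; linear_combination h1
          refine ⟨x, ?_, hL⟩
          have hq' : (3*x^2 - 6*μ*x + (1 - 4*μ*ν))*(12*μ^2 + 4*μ*ν + 8)^2 = 0 := by
            linear_combination (3*((12*μ^2 + 4*μ*ν + 8)*x - (6*ν - 2*μ + 8*μ^2*ν)) -
              6*μ*(12*μ^2 + 4*μ*ν + 8))*hL + (4 : k)*hp2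
          rcases mul_eq_zero.mp hq' with h' | h'
          · exact h'
          · exact absurd h' (pow_ne_zero 2 hP)
      obtain ⟨x, hq, hL⟩ := key
      have hg2 : x^3 + 3*(1 : k)*x + 2*ν = 0 := by
        linear_combination (x/3 + 2*μ/3)*hq + (1/3 : k)*hL
      have hg1 : 2*μ*x^3 + 3*x^2 + (1 : k) = 0 := by
        linear_combination 2*μ*hg2 + hq
      exact mk_singular μ ν x 1 (Or.inl rfl) hg1 hg2
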